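/- Fix q ∈ (2,4), α > 0 and μ > 0, and let u ∈ H¹(ℝ⁺, g dx) satisfy ∫₀^∞ u² g dx ≤ μ and Ẽ_{q,α}(u) < 0. Then |∫₀¹ u(x)² dx − u(0)²| ≤ (2α/q)|u(0)|^q + 2|u(0)| ((2α/q)|u(0)|^q)^{1/2}. -/

import Mathlib

open MeasureTheory Set

/-- The weight `g(x) = 4` for `x ≤ 1` and `g(x) = 4(2x−1)` for `x > 1`. -/
noncomputable def g (x : ℝ) : ℝ := if x ≤ 1 then 4 else 4 * (2 * x - 1)

/-- `u` belongs to the weighted Sobolev space `H¹(ℝ⁺, g dx)` with derivative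
`u'`: it is locally absolutely continuous on `[0,∞)` (primitive of `u'`) and
both `u² g` and `u'² g` are integrable on `(0,∞)`. -/
def InH1g (u u' : ℝ → ℝ) : Prop :=
  IntegrableOn (fun x => (u x) ^ 2 * g x) (Ioi 0) ∧
    IntegrableOn (fun x => (u' x) ^ 2 * g x) (Ioi 0) ∧
    ∀ a b : ℝ, 0 ≤ a → 0 ≤ b → u b - u a = ∫ x in a..b, u' x

/-- The weighted mass `∫₀^∞ u² g dx`. -/
noncomputable def massg (u : ℝ → ℝ) : ℝ := ∫ x in Ioi (0 : ℝ), (u x) ^ 2 * g x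

/-- The reduced energy `Ẽ_{q,α}(u) = (1/2)∫₀^∞ u'² g dx − (α/q)|u(0)|^q`. -/
noncomputable def energyg (q α : ℝ) (u u' : ℝ → ℝ) : ℝ :=
  (1 / 2) * (∫ x in Ioi (0 : ℝ), (u' x) ^ 2 * g x) - (α / q) * |u 0| ^ q

/-- The set of reduced energies over `X_μ = {u : 0 < ∫ u² g ≤ μ}`;
its infimum is `𝓔̃_{q,α}(μ)`. -/
def levelSetg (q α μ : ℝ) : Set ℝ :=
  {E | ∃ u u' : ℝ → ℝ, InH1g u u' ∧ 0 < massg u ∧ massg u ≤ μ ∧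
    E = energyg q α u u'}

set_option maxHeartbeats 1000000 in
/-- If `u ∈ H¹(ℝ⁺, g dx)` has weighted mass at most `μ` and negative reduced
energy, then `|∫₀¹ u² − u(0)²| ≤ (2α/q)|u(0)|^q + 2|u(0)|((2α/q)|u(0)|^q)^{1/2}`. -/
theorem stmt15 (q α μ : ℝ) (hq : 2 < q) (hq' : q < 4) (hα : 0 < α) (hμ : 0 < μ)
    (u u' : ℝ → ℝ) (hu : InH1g u u') (hm : massg u ≤ μ)
    (hE : energyg q α u u' < 0) :
    |(∫ x in (0 : ℝ)..1, (u x) ^ 2) - (u 0) ^ 2| ≤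
      (2 * α / q) * |u 0| ^ q +
        2 * |u 0| * Real.sqrt ((2 * α / q) * |u 0| ^ q) := by
  obtain ⟨hu2, hu'2, hFTC⟩ := hu
  set C := (2 * α / q) * |u 0| ^ q with hC
  have hq0 : (0:ℝ) < q := by linarith
  -- basic facts about g
  have hgpos : ∀ x : ℝ, 0 < g x := by
    intro x; unfold g; split_ifs with h
    · norm_num
    · push_neg at h; nlinarith
  have hgmeas : Measurable g := by
    unfold g
    exact Measurable.ite (measurableSet_le measurable_id measurable_const)
      measurable_const (by fun_prop)
  have hgeq : ∀ x ∈ Ioc (0:ℝ) 1, g x = 4 := by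
    intro x hx; unfold g; rw [if_pos hx.2]
  -- energy bound
  have hI'nonneg : 0 ≤ ∫ x in Ioi (0:ℝ), (u' x) ^ 2 * g x := by
    apply setIntegral_nonneg measurableSet_Ioi
    intro x _; have := hgpos x; positivity
  have hI'lt : (∫ x in Ioi (0:ℝ), (u' x) ^ 2 * g x) < C := by
    unfold energyg at hE
    have h2 : C = 2 * ((α / q) * |u 0| ^ q) := by rw [hC]; ring
    linarith
  have hCpos : 0 < C := lt_of_le_of_lt hI'nonneg hI'lt
  have hsC : 0 < Real.sqrt C := Real.sqrt_pos.mpr hCpos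
  set s := Real.sqrt C / 2 with hs
  have hspos : 0 < s := by positivity
  -- measurability of u'^2
  have hu'sq_meas : AEStronglyMeasurable (fun x => (u' x) ^ 2)
      (volume.restrict (Ioi (0:ℝ))) := by
    have heq : (fun x => (u' x) ^ 2) = fun x => ((u' x) ^ 2 * g x) / g x := by
      funext x; rw [mul_div_cancel_right₀ _ (ne_of_gt (hgpos x))]
    rw [heq]
    have h1 : AEMeasurable (fun x => (u' x) ^ 2 * g x) (volume.restrict (Ioi (0:ℝ))) :=
      hu'2.aemeasurable
    have h2 : AEMeasurable g (volume.restrict (Ioi (0:ℝ))) := hgmeas.aemeasurable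
    exact (h1.div h2).aestronglyMeasurable
  -- integrability of u'^2 on (0,1]
  have hu'int : IntegrableOn (fun x => (u' x) ^ 2) (Ioc 0 1) := by
    have h1 : IntegrableOn (fun x => (u' x) ^ 2 * g x) (Ioc (0:ℝ) 1) :=
      hu'2.mono_set Ioc_subset_Ioi_self
    exact IntegrableOn.congr_fun (h1.div_const 4)
      (fun x hx => by show u' x ^ 2 * g x / 4 = u' x ^ 2; rw [hgeq x hx]; ring)
      measurableSet_Ioc
  -- bound on ∫₀ˣ u'²
  have hbound : ∀ x ∈ Icc (0:ℝ) 1, (∫ t in (0:ℝ)..x, (u' t) ^ 2) ≤ C / 4 := by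
    intro x hx
    rw [intervalIntegral.integral_of_le hx.1]
    have step1 : (∫ t in Ioc (0:ℝ) x, (u' t) ^ 2)
        = ∫ t in Ioc (0:ℝ) x, ((u' t) ^ 2 * g t) / 4 := by
      apply setIntegral_congr_fun measurableSet_Ioc
      intro t ht
      show u' t ^ 2 = u' t ^ 2 * g t / 4
      rw [hgeq t ⟨ht.1, le_trans ht.2 hx.2⟩]; ring
    rw [step1]
    have step2 : (∫ t in Ioc (0:ℝ) x, ((u' t) ^ 2 * g t) / 4)
        = (∫ t in Ioc (0:ℝ) x, (u' t) ^ 2 * g t) / 4 := by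
      rw [integral_div]
    rw [step2]
    have step3 : (∫ t in Ioc (0:ℝ) x, (u' t) ^ 2 * g t)
        ≤ ∫ t in Ioi (0:ℝ), (u' t) ^ 2 * g t := by
      apply setIntegral_mono_set hu'2
      · filter_upwards with t
        have := hgpos t; positivity
      · exact HasSubset.Subset.eventuallyLE Ioc_subset_Ioi_self
    linarith
  -- measurability / integrability of |u'|
  have habs_meas : AEStronglyMeasurable (fun t => |u' t|)
      (volume.restrict (Ioc (0:ℝ) 1)) := by
    have h1 : AEStronglyMeasurable (fun x => (u' x) ^ 2)
        (volume.restrict (Ioc (0:ℝ) 1)) :=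
      hu'sq_meas.mono_measure (Measure.restrict_mono Ioc_subset_Ioi_self le_rfl)
    have h2 := Real.continuous_sqrt.comp_aestronglyMeasurable h1
    refine h2.congr ?_
    filter_upwards with t
    simp [Real.sqrt_sq_eq_abs]
  have habs_int : IntegrableOn (fun t => |u' t|) (Ioc (0:ℝ) 1) := by
    apply Integrable.mono' (hu'int.add (integrable_const 1)) habs_meas
    filter_upwards with t
    rw [Real.norm_eq_abs, abs_abs]
    show |u' t| ≤ u' t ^ 2 + 1
    nlinarith [sq_nonneg (|u' t| - 1), sq_abs (u' t), abs_nonneg (u' t)]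
  -- pointwise bound on |u x - u 0|
  have hux : ∀ x ∈ Icc (0:ℝ) 1, |u x - u 0| ≤ Real.sqrt C := by
    intro x hx
    have hd : u x - u 0 = ∫ t in (0:ℝ)..x, u' t := hFTC 0 x le_rfl hx.1
    rw [hd]
    have hsub : Ioc (0:ℝ) x ⊆ Ioc (0:ℝ) 1 := Ioc_subset_Ioc le_rfl hx.2
    have hii : IntervalIntegrable (fun t => |u' t|) volume 0 x := by
      rw [intervalIntegrable_iff_integrableOn_Ioc_of_le hx.1]
      exact habs_int.mono_set hsub
    have hrhs_int : IntervalIntegrable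
        (fun t => (u' t) ^ 2 / (2 * s) + s / 2) volume 0 x := by
      rw [intervalIntegrable_iff_integrableOn_Ioc_of_le hx.1]
      exact ((hu'int.mono_set hsub).div_const (2 * s)).add (integrable_const _)
    have hsq_ii : IntervalIntegrable (fun t => (u' t) ^ 2) volume 0 x := by
      rw [intervalIntegrable_iff_integrableOn_Ioc_of_le hx.1]
      exact hu'int.mono_set hsub
    calc |∫ t in (0:ℝ)..x, u' t|
        ≤ |(∫ t in (0:ℝ)..x, |u' t|)| := by
          simpa [Real.norm_eq_abs] using
            intervalIntegral.norm_integral_le_abs_integral_norm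
              (f := u') (a := 0) (b := x) (μ := volume)
      _ = ∫ t in (0:ℝ)..x, |u' t| := by
          rw [abs_of_nonneg (intervalIntegral.integral_nonneg hx.1
            (fun t _ => abs_nonneg _))]
      _ ≤ ∫ t in (0:ℝ)..x, ((u' t) ^ 2 / (2 * s) + s / 2) := by
          apply intervalIntegral.integral_mono_on hx.1 hii hrhs_int
          intro t _
          have h1 : 2 * s * |u' t| ≤ u' t ^ 2 + s * s := by
            nlinarith [sq_nonneg (|u' t| - s), sq_abs (u' t)]
          have h2 : u' t ^ 2 / (2 * s) + s / 2 = (u' t ^ 2 + s * s) / (2 * s) := by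
            field_simp
          rw [h2, le_div_iff₀ (by positivity : (0:ℝ) < 2 * s)]
          have h3 : |u' t| * (2 * s) = 2 * s * |u' t| := by ring
          linarith
      _ = (∫ t in (0:ℝ)..x, (u' t) ^ 2) / (2 * s) + s / 2 * x := by
          rw [intervalIntegral.integral_add (hsq_ii.div_const _)
            intervalIntegrable_const, intervalIntegral.integral_div,
            intervalIntegral.integral_const]
          simp only [smul_eq_mul]
          ring
      _ ≤ (C / 4) / (2 * s) + s / 2 := by
          have h1 := hbound x hx
          have h2 : s / 2 * x ≤ s / 2 := by nlinarith [hx.2, hspos]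
          have h3 : (∫ t in (0:ℝ)..x, (u' t) ^ 2) / (2 * s) ≤ (C / 4) / (2 * s) := by
            apply div_le_div_of_nonneg_right h1 ?_ |>.trans le_rfl
            · positivity
          linarith
      _ ≤ Real.sqrt C := by
          have hCs : Real.sqrt C * Real.sqrt C = C := Real.mul_self_sqrt hCpos.le
          have hne : Real.sqrt C ≠ 0 := ne_of_gt hsC
          have h1 : (C / 4) / (2 * s) = Real.sqrt C / 4 := by
            rw [hs]; field_simp; nlinarith [hCs]
          rw [h1, hs]; linarith [hsC]
  -- integrability of u² on (0,1]
  have huint : IntervalIntegrable (fun x => (u x) ^ 2) volume 0 1 := by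
    rw [intervalIntegrable_iff_integrableOn_Ioc_of_le (by norm_num : (0:ℝ) ≤ 1)]
    have h1 : IntegrableOn (fun x => (u x) ^ 2 * g x) (Ioc (0:ℝ) 1) :=
      hu2.mono_set Ioc_subset_Ioi_self
    exact IntegrableOn.congr_fun (h1.div_const 4)
      (fun x hx => by show u x ^ 2 * g x / 4 = u x ^ 2; rw [hgeq x hx]; ring)
      measurableSet_Ioc
  -- conclude
  have hsplit : (∫ x in (0:ℝ)..1, (u x) ^ 2) - (u 0) ^ 2
      = ∫ x in (0:ℝ)..1, ((u x) ^ 2 - (u 0) ^ 2) := by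
    rw [intervalIntegral.integral_sub huint intervalIntegrable_const,
      intervalIntegral.integral_const]
    simp
  rw [hsplit]
  have hkey : ∀ x ∈ Set.uIoc (0:ℝ) 1,
      ‖(u x) ^ 2 - (u 0) ^ 2‖ ≤ C + 2 * |u 0| * Real.sqrt C := by
    intro x hx
    rw [Set.uIoc_of_le (by norm_num : (0:ℝ) ≤ 1)] at hx
    have hx' : x ∈ Icc (0:ℝ) 1 := ⟨hx.1.le, hx.2⟩
    have hd := hux x hx'
    set d := u x - u 0 with hdd
    have hux2 : (u x) ^ 2 - (u 0) ^ 2 = d ^ 2 + 2 * (u 0) * d := by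
      rw [hdd]; ring
    rw [Real.norm_eq_abs, hux2]
    have h1 : d ^ 2 ≤ C := by
      have := sq_abs d
      nlinarith [Real.mul_self_sqrt hCpos.le, abs_nonneg d]
    have h2 : |2 * (u 0) * d| ≤ 2 * |u 0| * Real.sqrt C := by
      rw [abs_mul, abs_mul, abs_two]
      have := abs_nonneg (u 0)
      nlinarith
    calc |d ^ 2 + 2 * u 0 * d| ≤ |d ^ 2| + |2 * u 0 * d| := abs_add_le _ _
      _ ≤ C + 2 * |u 0| * Real.sqrt C := by
          rw [abs_of_nonneg (sq_nonneg d)]; linarith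
  have := intervalIntegral.norm_integral_le_of_norm_le_const hkey
  rw [Real.norm_eq_abs] at this
  simpa using this
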